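/- Let (σ_i)_{i ∈ Fin n} be a maximal CDP family whose underlying set is closed under composition, i.e. for all i, j there exists k with σ_i ∘ σ_j = σ_k. Then (1) σ_i ∘ σ_j = σ_{σ_i(j)} for all i, j; (2) σ_i⁻¹ = σ_j if and only if σ_i(j) = 0, if and only if σ_j(i) = 0; and (3) σ_0 is the identity permutation and for every i ≠ 0 the permutation σ_i has no fixed point. -/
import Mathlib


/-- For a maximal CDP family closed under composition: the composition law
`σ_i ∘ σ_j = σ_{σ_i(j)}` holds, inverses are characterized by `σ_i(j) = 0 ⟺ σ_j(i) = 0`,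
`σ_0` is the identity, and every other member has no fixed point. -/
theorem cdp_group_properties {n : ℕ} [NeZero n] (σ : Fin n → Equiv.Perm (Fin n))
    (hcdp : ∀ i j, i ≠ j → ∀ k, σ i k ≠ σ j k)
    (hnorm : ∀ i, σ i 0 = i)
    (hclosed : ∀ i j, ∃ k, σ i * σ j = σ k) :
    (∀ i j, σ i * σ j = σ (σ i j)) ∧
    (∀ i j, ((σ i)⁻¹ = σ j ↔ σ i j = 0) ∧ ((σ i)⁻¹ = σ j ↔ σ j i = 0)) ∧
    (σ 0 = 1 ∧ ∀ i, i ≠ 0 → ∀ x, σ i x ≠ x) := by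
  have hinj : Function.Injective σ := by
    intro i j h
    by_contra hne
    exact hcdp i j hne 0 (by rw [h])
  have hcomp : ∀ i j, σ i * σ j = σ (σ i j) := by
    intro i j
    obtain ⟨k, hk⟩ := hclosed i j
    have h0 : σ i (σ j 0) = σ k 0 := by
      have := congrArg (fun e : Equiv.Perm (Fin n) => e 0) hk
      simpa using this
    rw [hnorm, hnorm] at h0
    rw [hk, h0]
  have hid : σ 0 = 1 := by
    have h := hcomp 0 0
    rw [hnorm] at h
    have := mul_right_cancel (b := σ 0) (a := σ 0) (c := 1) (by simpa using h)
    exact this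
  have hinv : ∀ i j, ((σ i)⁻¹ = σ j ↔ σ i j = 0) := by
    intro i j
    constructor
    · intro h
      have : σ i * σ j = 1 := by rw [← h, mul_inv_cancel]
      rw [hcomp] at this
      have : σ (σ i j) = σ 0 := by rw [this, hid]
      exact hinj this
    · intro h
      have : σ i * σ j = 1 := by rw [hcomp, h, hid]
      exact (mul_eq_one_iff_inv_eq.mp this)
  refine ⟨hcomp, fun i j => ⟨hinv i j, ?_⟩, hid, ?_⟩
  · rw [← hinv j i]
    constructor
    · intro h; rw [← h, inv_inv]
    · intro h; rw [← h, inv_inv]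
  · intro i hi x hx
    exact hcdp i 0 hi x (by rw [hid]; simpa using hx)
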